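/- arXiv:1301.5942 — 3 statements merged into one kernel-verified Lean document; each statement's English description precedes it below -/
import Mathlib

section
/- Let p and q be probability distributions on the finite product set {1,...,M_x} × {1,...,M_y} (with 2 ≤ M_x and 2 ≤ M_y), regarded as joint distributions of pairs of random variables (X,Y) and (X',Y') respectively. Set ε = V(p,q), the variational distance between p and q. If ε ≤ 2 − 2/(M_x·M_y), then |I(p) − I(q)| ≤ 3·(ε/2)·log(M_x·M_y − 1) + 3·ℋ(ε/2), where I denotes mutual information and ℋ is the binary entropy function (all logarithms natural). -/
open scoped BigOperators

/-- `p` is a probability distribution on the finite type `α`. -/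
def IsDist {α : Type*} [Fintype α] (p : α → ℝ) : Prop :=
  (∀ a, 0 ≤ p a) ∧ ∑ a, p a = 1

/-- Shannon entropy (natural logarithm, with `0 · log 0 = 0`). -/
noncomputable def entropy {α : Type*} [Fintype α] (p : α → ℝ) : ℝ :=
  -∑ a, p a * Real.log (p a)

/-- Variational distance between two distributions on the same finite set. -/
noncomputable def Vdist {α : Type*} [Fintype α] (p q : α → ℝ) : ℝ :=
  ∑ a, |p a - q a|

/-- First marginal of a joint distribution. -/
noncomputable def margX {Mx My : ℕ} (p : Fin Mx × Fin My → ℝ) : Fin Mx → ℝ :=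
  fun i => ∑ j, p (i, j)

/-- Second marginal of a joint distribution. -/
noncomputable def margY {Mx My : ℕ} (p : Fin Mx × Fin My → ℝ) : Fin My → ℝ :=
  fun j => ∑ i, p (i, j)

/-- Mutual information of a joint distribution. -/
noncomputable def mutInfo {Mx My : ℕ} (p : Fin Mx × Fin My → ℝ) : ℝ :=
  entropy (margX p) + entropy (margY p) - entropy p

/-- Binary entropy function. -/
noncomputable def binEnt (x : ℝ) : ℝ :=
  -x * Real.log x - (1 - x) * Real.log (1 - x)


section ZhangAux
open Finset

lemma binEnt_nonneg {x : ℝ} (h0 : 0 ≤ x) (h1 : x ≤ 1) : 0 ≤ binEnt x := by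
  have l1 := Real.log_nonpos h0 h1
  have l2 := Real.log_nonpos (by linarith : (0:ℝ) ≤ 1 - x) (by linarith)
  unfold binEnt
  nlinarith

lemma gibbs {α : Type*} [Fintype α] (w r : α → ℝ)
    (hw : ∀ a, 0 ≤ w a) (hr : ∀ a, 0 ≤ r a)
    (hsum : ∑ a, r a ≤ ∑ a, w a)
    (hpos : ∀ a, 0 < w a → 0 < r a) :
    -∑ a, w a * Real.log (w a) ≤ -∑ a, w a * Real.log (r a) := by
  have key : ∀ a ∈ univ, w a * Real.log (r a) - w a * Real.log (w a) ≤ r a - w a := by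
    intro a _
    rcases eq_or_lt_of_le (hw a) with h | h
    · simp [← h]; exact hr a
    · have hra := hpos a h
      have hlog : Real.log (r a) - Real.log (w a) ≤ r a / w a - 1 := by
        rw [← Real.log_div (ne_of_gt hra) (ne_of_gt h)]
        exact Real.log_le_sub_one_of_pos (div_pos hra h)
      have h2 : w a * (Real.log (r a) - Real.log (w a)) ≤ w a * (r a / w a - 1) :=
        mul_le_mul_of_nonneg_left hlog (le_of_lt h)
      have h3 : w a * (r a / w a - 1) = r a - w a := by field_simp
      nlinarith
  have hs := Finset.sum_le_sum key
  rw [Finset.sum_sub_distrib, Finset.sum_sub_distrib] at hs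
  linarith

lemma entropy_marg_fst_le {α β : Type*} [Fintype α] [Fintype β]
    (w : α × β → ℝ) (hw : ∀ x, 0 ≤ w x) :
    entropy (fun a => ∑ b, w (a, b)) ≤ entropy w := by
  unfold entropy
  rw [neg_le_neg_iff, Fintype.sum_prod_type]
  apply Finset.sum_le_sum
  intro a _
  rw [Finset.sum_mul]
  apply Finset.sum_le_sum
  intro b _
  rcases eq_or_lt_of_le (hw (a, b)) with h | h
  · simp [← h]
  · apply mul_le_mul_of_nonneg_left _ (le_of_lt h)
    apply Real.log_le_log h
    exact Finset.single_le_sum (fun b' _ => hw (a, b')) (mem_univ b)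

lemma phi_mono {c a b : ℝ} (hc : 2 ≤ c) (ha : 0 ≤ a) (hab : a ≤ b) (hb : b ≤ 1 - 1 / c) :
    a * Real.log (c - 1) + binEnt a ≤ b * Real.log (c - 1) + binEnt b := by
  have hc0 : (0:ℝ) < c := by linarith
  have hc1 : (0:ℝ) < c - 1 := by linarith
  have hb1 : b < 1 := by
    have : 0 < 1 / c := by positivity
    linarith
  have hL : 0 ≤ Real.log (c - 1) := Real.log_nonneg (by linarith)
  rcases eq_or_lt_of_le ha with h0a | h0a
  · -- a = 0
    rw [← h0a]
    simp [binEnt]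
    have hb0 : 0 ≤ b := le_trans ha hab
    have l1 := Real.log_nonpos hb0 (le_of_lt hb1)
    have l2 := Real.log_nonpos (by linarith : (0:ℝ) ≤ 1 - b) (by linarith)
    nlinarith [mul_nonneg hb0 hL]
  · have hb0 : 0 < b := lt_of_lt_of_le h0a hab
    have h1b : 0 < 1 - b := by linarith
    have h1a : 0 < 1 - a := by linarith
    -- Gibbs 2-point: -a log a - (1-a) log(1-a) ≤ -a log b - (1-a) log (1-b)
    have g1 : a * (Real.log b - Real.log a) ≤ b - a := by
      have := Real.log_le_sub_one_of_pos (div_pos hb0 h0a)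
      rw [Real.log_div (ne_of_gt hb0) (ne_of_gt h0a)] at this
      have := mul_le_mul_of_nonneg_left this (le_of_lt h0a)
      calc a * (Real.log b - Real.log a) ≤ a * (b / a - 1) := this
        _ = b - a := by field_simp
    have g2 : (1 - a) * (Real.log (1 - b) - Real.log (1 - a)) ≤ a - b := by
      have h := Real.log_le_sub_one_of_pos (div_pos h1b h1a)
      rw [Real.log_div (ne_of_gt h1b) (ne_of_gt h1a)] at h
      have h' := mul_le_mul_of_nonneg_left h (le_of_lt h1a)
      calc (1 - a) * (Real.log (1 - b) - Real.log (1 - a)) ≤ (1 - a) * ((1 - b) / (1 - a) - 1) := h'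
        _ = a - b := by field_simp; ring
    -- second: (b - a) * (log(c-1) + log(1-b) - log b) ≥ 0
    have key : 0 ≤ Real.log (c - 1) + Real.log (1 - b) - Real.log b := by
      have hcb : c * b ≤ c - 1 := by
        have h5 := mul_le_mul_of_nonneg_left hb (le_of_lt hc0)
        have h6 : c * (1 - 1 / c) = c - 1 := by field_simp
        linarith
      have hq : 1 ≤ (c - 1) * (1 - b) / b := by
        rw [le_div_iff₀ hb0]
        nlinarith
      have := Real.log_nonneg hq
      rw [Real.log_div (by positivity) (ne_of_gt hb0), Real.log_mul (ne_of_gt hc1) (ne_of_gt h1b)] at this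
      linarith
    have g3 : 0 ≤ (b - a) * (Real.log (c - 1) + Real.log (1 - b) - Real.log b) :=
      mul_nonneg (by linarith) key
    unfold binEnt
    nlinarith

lemma entropy_sub_le_main {α : Type*} [Fintype α] [DecidableEq α]
    (hcard : 2 ≤ Fintype.card α) (p q : α → ℝ) (hp : IsDist p) (hq : IsDist q)
    (he0 : 0 < Vdist p q) (he1 : Vdist p q / 2 < 1) :
    entropy p - entropy q ≤
      (Vdist p q / 2) * Real.log ((Fintype.card α : ℝ) - 1) + binEnt (Vdist p q / 2) := by
  set e : ℝ := Vdist p q / 2 with he_def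
  have he0' : 0 < e := by positivity
  set c : ℝ := (Fintype.card α : ℝ) with hc_def
  have hc : (2:ℝ) ≤ c := by rw [hc_def]; exact_mod_cast hcard
  have hc1 : (0:ℝ) < c - 1 := by linarith
  set m : α → ℝ := fun a => min (p a) (q a) with hm_def
  set f : α → ℝ := fun a => p a - m a with hf_def
  set g : α → ℝ := fun b => q b - m b with hg_def
  have hm0 : ∀ a, 0 ≤ m a := fun a => le_min (hp.1 a) (hq.1 a)
  have hf0 : ∀ a, 0 ≤ f a := fun a => by simp [hf_def, hm_def, min_le_left]
  have hg0 : ∀ b, 0 ≤ g b := fun b => by simp [hg_def, hm_def, min_le_right]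
  have hfg : ∀ a, f a * g a = 0 := by
    intro a
    rcases le_total (p a) (q a) with h | h
    · simp [hf_def, hm_def, min_eq_left h]
    · simp [hg_def, hm_def, min_eq_right h]
  have habs : ∀ a, |p a - q a| = p a + q a - 2 * m a := by
    intro a
    have hma : m a = min (p a) (q a) := rfl
    rcases le_total (p a) (q a) with h | h
    · rw [hma, min_eq_left h, abs_of_nonpos (by linarith)]; ring
    · rw [hma, min_eq_right h, abs_of_nonneg (by linarith)]; ring
  have hsm : ∑ a, m a = 1 - e := by
    have h1 : Vdist p q = ∑ a, (p a + q a - 2 * m a) := by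
      unfold Vdist; exact Finset.sum_congr rfl (fun a _ => habs a)
    rw [Finset.sum_sub_distrib, Finset.sum_add_distrib, hp.2, hq.2, ← Finset.mul_sum] at h1
    rw [he_def, h1]; ring
  have hsf : ∑ a, f a = e := by
    rw [hf_def]; rw [Finset.sum_sub_distrib, hp.2, hsm]; ring
  have hsg : ∑ b, g b = e := by
    rw [hg_def]; rw [Finset.sum_sub_distrib, hq.2, hsm]; ring
  -- coupling
  set w : α × α → ℝ := fun x => if x.1 = x.2 then m x.1 else f x.1 * g x.2 / e with hw_def
  have hw0 : ∀ x, 0 ≤ w x := by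
    intro x; rw [hw_def]; dsimp only; split
    · exact hm0 _
    · exact div_nonneg (mul_nonneg (hf0 _) (hg0 _)) he0'.le
  have hmargfst : ∀ a, ∑ b, w (a, b) = p a := by
    intro a
    have step : ∀ b, w (a, b) = f a * g b / e + (if a = b then m a else 0) := by
      intro b
      rw [hw_def]; dsimp only; split
      · rename_i h; subst h; simp [hfg a]
      · simp
    rw [Finset.sum_congr rfl (fun b _ => step b), Finset.sum_add_distrib]
    rw [Finset.sum_ite_eq univ a (fun _ => m a)]
    simp only [mem_univ, if_true]
    have : ∑ b, f a * g b / e = f a := by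
      rw [← Finset.sum_div, ← Finset.mul_sum, hsg]
      field_simp
    rw [this]; simp [hf_def]
  have hmargsnd : ∀ b, ∑ a, w (a, b) = q b := by
    intro b
    have step : ∀ a, w (a, b) = f a * g b / e + (if a = b then m b else 0) := by
      intro a
      rw [hw_def]; dsimp only; split
      · rename_i h; subst h; simp [hfg a]
      · simp
    rw [Finset.sum_congr rfl (fun a _ => step a), Finset.sum_add_distrib]
    have : (∑ a, if a = b then m b else 0) = m b := by
      rw [Finset.sum_ite_eq' univ b (fun _ => m b)]; simp
    rw [this]
    have : ∑ a, f a * g b / e = g b := by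
      rw [← Finset.sum_div, ← Finset.sum_mul, hsf]
      field_simp
    rw [this]; simp [hg_def]
  have hdiag : ∑ x : α × α, (if x.1 = x.2 then w x else 0) = 1 - e := by
    rw [Fintype.sum_prod_type]
    have : ∀ a : α, (∑ b, if a = b then w (a, b) else 0) = m a := by
      intro a
      rw [Finset.sum_ite_eq univ a (fun b => w (a, b))]
      simp [hw_def]
    rw [Finset.sum_congr rfl (fun a _ => this a), hsm]
  have htotal : ∑ x : α × α, w x = 1 := by
    rw [Fintype.sum_prod_type]
    rw [Finset.sum_congr rfl (fun a _ => hmargfst a), hp.2]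
  have hoff : ∑ x : α × α, (if x.1 = x.2 then 0 else w x) = e := by
    have h1 : ∑ x : α × α, ((if x.1 = x.2 then w x else 0) + (if x.1 = x.2 then 0 else w x)) = 1 := by
      rw [← htotal]
      exact Finset.sum_congr rfl (fun x _ => by split <;> ring)
    rw [Finset.sum_add_distrib, hdiag] at h1
    linarith
  -- reference distribution r
  set r : α × α → ℝ := fun x => q x.2 * (if x.1 = x.2 then 1 - e else e / (c - 1)) with hr_def
  have hu0 : ∀ x : α × α, 0 < (if x.1 = x.2 then 1 - e else e / (c - 1)) := by
    intro x; split
    · linarith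
    · positivity
  have hr0 : ∀ x, 0 ≤ r x := by
    intro x; rw [hr_def]; exact mul_nonneg (hq.1 _) (le_of_lt (hu0 x))
  have hq2pos : ∀ x : α × α, 0 < w x → 0 < q x.2 := by
    intro x hx
    rw [hw_def] at hx; dsimp only at hx
    by_contra hqz
    push_neg at hqz
    have hq0 : q x.2 = 0 := le_antisymm hqz (hq.1 _)
    have hmz : m x.2 = 0 := le_antisymm (by rw [hm_def]; simpa [hq0] using min_le_right (p x.2) 0) (hm0 _)
    have hgz : g x.2 = 0 := by rw [hg_def]; simp [hq0, hmz]
    split at hx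
    · rename_i h; rw [h] at hx; rw [hmz] at hx; exact lt_irrefl 0 hx
    · rw [hgz] at hx; simp at hx
  have hrpos : ∀ x, 0 < w x → 0 < r x := by
    intro x hx
    rw [hr_def]
    exact mul_pos (hq2pos x hx) (hu0 x)
  have hsumr : ∑ x : α × α, r x = 1 := by
    rw [Fintype.sum_prod_type, Finset.sum_comm]
    have inner : ∀ b : α, ∑ a, r (a, b) = q b := by
      intro b
      have : ∀ a : α, r (a, b) = q b * (e / (c - 1)) + (if a = b then q b * (1 - e) - q b * (e / (c-1)) else 0) := by
        intro a; rw [hr_def]; dsimp only; split <;> ring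
      rw [Finset.sum_congr rfl (fun a _ => this a), Finset.sum_add_distrib, Finset.sum_const]
      rw [Finset.sum_ite_eq' univ b]
      simp only [mem_univ, if_true, card_univ, nsmul_eq_mul]
      have hcne : c - 1 ≠ 0 := ne_of_gt hc1
      rw [← hc_def]  -- hope card cast matches
      field_simp
      ring
    rw [Finset.sum_congr rfl (fun b _ => inner b), hq.2]
  -- apply Gibbs
  have hgibbs : entropy w ≤ -∑ x, w x * Real.log (r x) :=
    gibbs w r hw0 hr0 (by rw [hsumr, htotal]) hrpos
  -- compute the cross entropy
  have hsplit : ∑ x, w x * Real.log (r x)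
      = ∑ x, w x * Real.log (q x.2) + ∑ x, w x * Real.log (if x.1 = x.2 then 1 - e else e / (c - 1)) := by
    rw [← Finset.sum_add_distrib]
    apply Finset.sum_congr rfl
    intro x _
    rcases eq_or_lt_of_le (hw0 x) with h | h
    · rw [← h]; ring
    · rw [hr_def]; dsimp only
      rw [Real.log_mul (ne_of_gt (hq2pos x h)) (ne_of_gt (hu0 x))]
      ring
  have hterm1 : ∑ x : α × α, w x * Real.log (q x.2) = -entropy q := by
    rw [Fintype.sum_prod_type, Finset.sum_comm]
    have : ∀ b : α, ∑ a, w (a, b) * Real.log (q b) = q b * Real.log (q b) := by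
      intro b; rw [← Finset.sum_mul, hmargsnd b]
    rw [Finset.sum_congr rfl (fun b _ => this b)]
    unfold entropy; ring
  have hterm2 : ∑ x : α × α, w x * Real.log (if x.1 = x.2 then 1 - e else e / (c - 1))
      = (1 - e) * Real.log (1 - e) + e * (Real.log e - Real.log (c - 1)) := by
    have step : ∀ x : α × α, w x * Real.log (if x.1 = x.2 then 1 - e else e / (c - 1))
        = (if x.1 = x.2 then w x else 0) * Real.log (1 - e)
          + (if x.1 = x.2 then 0 else w x) * (Real.log e - Real.log (c - 1)) := by
      intro x; split
      · ring
      · rw [Real.log_div (ne_of_gt he0') (ne_of_gt hc1)]; ring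
    rw [Finset.sum_congr rfl (fun x _ => step x), Finset.sum_add_distrib,
      ← Finset.sum_mul, ← Finset.sum_mul, hdiag, hoff]
  have hmarg : entropy p ≤ entropy w := by
    have h := entropy_marg_fst_le w hw0
    have heq : (fun a => ∑ b, w (a, b)) = p := funext hmargfst
    rwa [heq] at h
  rw [hsplit, hterm1, hterm2] at hgibbs
  simp only [binEnt]
  linarith

end ZhangAux

section Glue
open Finset

lemma Vdist_nonneg' {α : Type*} [Fintype α] (p q : α → ℝ) : 0 ≤ Vdist p q :=
  Finset.sum_nonneg fun a _ => abs_nonneg _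

lemma Vdist_comm' {α : Type*} [Fintype α] (p q : α → ℝ) : Vdist p q = Vdist q p := by
  unfold Vdist; exact Finset.sum_congr rfl fun a _ => abs_sub_comm _ _

lemma eq_of_Vdist_eq_zero {α : Type*} [Fintype α] {p q : α → ℝ} (h : Vdist p q = 0) : p = q := by
  funext a
  have := (Finset.sum_eq_zero_iff_of_nonneg (fun a _ => abs_nonneg (p a - q a))).mp h a (mem_univ a)
  have := abs_eq_zero.mp this
  linarith

lemma abs_entropy_sub_le {α : Type*} [Fintype α] [DecidableEq α]
    (hcard : 2 ≤ Fintype.card α) (p q : α → ℝ) (hp : IsDist p) (hq : IsDist q)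
    (he1 : Vdist p q / 2 < 1) :
    |entropy p - entropy q| ≤
      (Vdist p q / 2) * Real.log ((Fintype.card α : ℝ) - 1) + binEnt (Vdist p q / 2) := by
  rcases eq_or_lt_of_le (Vdist_nonneg' p q) with h0 | h0
  · have hpq : p = q := eq_of_Vdist_eq_zero h0.symm
    rw [hpq]
    simp [Vdist, binEnt]
  · rw [abs_sub_le_iff]
    constructor
    · exact entropy_sub_le_main hcard p q hp hq h0 he1
    · have h := entropy_sub_le_main hcard q p hq hp (Vdist_comm' p q ▸ h0)
        (by rw [Vdist_comm' q p]; exact he1)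
      rwa [Vdist_comm' q p] at h
  done

lemma term_bound {β : Type*} [Fintype β] [DecidableEq β] (hcardβ : 2 ≤ Fintype.card β)
    (p' q' : β → ℝ) (hp' : IsDist p') (hq' : IsDist q')
    {N : ℝ} (hN : 2 ≤ N) (hcardle : (Fintype.card β : ℝ) ≤ N)
    {ε : ℝ} (hle : Vdist p' q' / 2 ≤ ε) (hε : ε ≤ 1 - 1 / N) :
    |entropy p' - entropy q'| ≤ ε * Real.log (N - 1) + binEnt ε := by
  have hNpos : (0:ℝ) < N := by linarith
  have hinv : 0 < 1 / N := by positivity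
  have h1 : Vdist p' q' / 2 < 1 := by linarith
  have hcb : (2:ℝ) ≤ (Fintype.card β : ℝ) := by exact_mod_cast hcardβ
  have hV0 : 0 ≤ Vdist p' q' / 2 := by have := Vdist_nonneg' p' q'; linarith
  have hb := abs_entropy_sub_le hcardβ p' q' hp' hq' h1
  have hlog : Real.log ((Fintype.card β : ℝ) - 1) ≤ Real.log (N - 1) :=
    Real.log_le_log (by linarith) (by linarith)
  calc |entropy p' - entropy q'|
      ≤ (Vdist p' q' / 2) * Real.log ((Fintype.card β : ℝ) - 1) + binEnt (Vdist p' q' / 2) := hb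
    _ ≤ (Vdist p' q' / 2) * Real.log (N - 1) + binEnt (Vdist p' q' / 2) := by
        have := mul_le_mul_of_nonneg_left hlog hV0
        linarith
    _ ≤ ε * Real.log (N - 1) + binEnt ε := phi_mono hN hV0 hle hε

lemma isDist_margX {Mx My : ℕ} {p : Fin Mx × Fin My → ℝ} (hp : IsDist p) : IsDist (margX p) := by
  constructor
  · intro i; exact Finset.sum_nonneg fun j _ => hp.1 _
  · rw [show (∑ i, margX p i) = ∑ x : Fin Mx × Fin My, p x from (Fintype.sum_prod_type _).symm]
    exact hp.2

lemma isDist_margY {Mx My : ℕ} {p : Fin Mx × Fin My → ℝ} (hp : IsDist p) : IsDist (margY p) := by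
  constructor
  · intro j; exact Finset.sum_nonneg fun i _ => hp.1 _
  · rw [show (∑ j, margY p j) = ∑ x : Fin Mx × Fin My, p x from (Fintype.sum_prod_type_right _).symm]
    exact hp.2

lemma Vdist_margX_le {Mx My : ℕ} (p q : Fin Mx × Fin My → ℝ) :
    Vdist (margX p) (margX q) ≤ Vdist p q := by
  unfold Vdist margX
  rw [Fintype.sum_prod_type (f := fun x => |p x - q x|)]
  apply Finset.sum_le_sum
  intro i _
  rw [← Finset.sum_sub_distrib]
  exact Finset.abs_sum_le_sum_abs _ _

lemma Vdist_margY_le {Mx My : ℕ} (p q : Fin Mx × Fin My → ℝ) :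
    Vdist (margY p) (margY q) ≤ Vdist p q := by
  unfold Vdist margY
  rw [Fintype.sum_prod_type_right (f := fun x => |p x - q x|)]
  apply Finset.sum_le_sum
  intro j _
  rw [← Finset.sum_sub_distrib]
  exact Finset.abs_sum_le_sum_abs _ _

end Glue

/-- Zhang's bound, Lemma 1: if `ε = V(p,q) ≤ 2 - 2/(Mx·My)` then
`|I(p) - I(q)| ≤ 3·(ε/2)·log(Mx·My - 1) + 3·ℋ(ε/2)`. -/
theorem mutInfo_diff_le_of_Vdist_eq {Mx My : ℕ} (hMx : 2 ≤ Mx) (hMy : 2 ≤ My)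
    (p q : Fin Mx × Fin My → ℝ) (hp : IsDist p) (hq : IsDist q)
    (hV : Vdist p q ≤ 2 - 2 / ((Mx : ℝ) * My)) :
    |mutInfo p - mutInfo q| ≤
      3 * (Vdist p q / 2) * Real.log ((Mx : ℝ) * My - 1) + 3 * binEnt (Vdist p q / 2) := by
  have hMx' : (2:ℝ) ≤ (Mx:ℝ) := by exact_mod_cast hMx
  have hMy' : (2:ℝ) ≤ (My:ℝ) := by exact_mod_cast hMy
  have hN : (2:ℝ) ≤ (Mx:ℝ) * My := by nlinarith
  have hε : Vdist p q / 2 ≤ 1 - 1 / ((Mx:ℝ) * My) := by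
    have h2 : 2 / ((Mx:ℝ) * My) = 2 * (1 / ((Mx:ℝ) * My)) := by ring
    linarith
  have hcardJ : 2 ≤ Fintype.card (Fin Mx × Fin My) := by
    rw [Fintype.card_prod, Fintype.card_fin, Fintype.card_fin]; nlinarith
  have hcardJle : (Fintype.card (Fin Mx × Fin My) : ℝ) ≤ (Mx:ℝ) * My := by
    rw [Fintype.card_prod, Fintype.card_fin, Fintype.card_fin]; push_cast
    exact le_refl _
  have hcardXle : (Fintype.card (Fin Mx) : ℝ) ≤ (Mx:ℝ) * My := by
    rw [Fintype.card_fin]; nlinarith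
  have hcardYle : (Fintype.card (Fin My) : ℝ) ≤ (Mx:ℝ) * My := by
    rw [Fintype.card_fin]; nlinarith
  have hVX : Vdist (margX p) (margX q) / 2 ≤ Vdist p q / 2 := by
    have := Vdist_margX_le p q; linarith
  have hVY : Vdist (margY p) (margY q) / 2 ≤ Vdist p q / 2 := by
    have := Vdist_margY_le p q; linarith
  have bX := term_bound (by simpa using hMx) (margX p) (margX q) (isDist_margX hp)
    (isDist_margX hq) hN hcardXle hVX hε
  have bY := term_bound (by simpa using hMy) (margY p) (margY q) (isDist_margY hp)
    (isDist_margY hq) hN hcardYle hVY hε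
  have bJ := term_bound hcardJ p q hp hq hN hcardJle (le_refl _) hε
  have hrw : mutInfo p - mutInfo q =
      (entropy (margX p) - entropy (margX q)) + (entropy (margY p) - entropy (margY q))
        + -(entropy p - entropy q) := by
    unfold mutInfo; ring
  rw [hrw]
  have h3 := abs_add_three (entropy (margX p) - entropy (margX q))
    (entropy (margY p) - entropy (margY q)) (-(entropy p - entropy q))
  rw [abs_neg] at h3
  have := h3.trans (by linarith : |entropy (margX p) - entropy (margX q)| +
    |entropy (margY p) - entropy (margY q)| + |entropy p - entropy q| ≤
    3 * ((Vdist p q / 2) * Real.log ((Mx:ℝ) * My - 1) + binEnt (Vdist p q / 2)))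
  linarith
end

section
/- Fix integers 2 ≤ M_x ≤ M_y. The function f(ε) = (ε/2)·log[(M_x·M_y − 1)(M_x − 1)(M_y − 1)] + 3·ℋ(ε/2) is strictly increasing on the interval ε ∈ (0, 2 − 2/M_x). -/
open scoped BigOperators

lemma hasDerivAt_binEnt (x : ℝ) (hx0 : 0 < x) (hx1 : x < 1) :
    HasDerivAt binEnt
      (Real.log (1 - x) - Real.log x) x := by
  unfold binEnt
  have h1 : HasDerivAt (fun y : ℝ => y * Real.log y) (Real.log x + 1) x :=
    Real.hasDerivAt_mul_log hx0.ne'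
  have h2 : HasDerivAt (fun y : ℝ => (1 - y)) (-1) x := by
    simpa using (hasDerivAt_id x).const_sub 1
  have h3 : HasDerivAt (fun y : ℝ => y * Real.log y) (Real.log (1 - x) + 1) (1 - x) :=
    Real.hasDerivAt_mul_log (by linarith)
  have h4 : HasDerivAt (fun y : ℝ => (1 - y) * Real.log (1 - y))
      ((Real.log (1 - x) + 1) * (-1)) x := h3.comp x h2
  have := (h1.neg.sub h4)
  have hf : (fun x : ℝ => -x * Real.log x - (1 - x) * Real.log (1 - x)) =
      ((-fun y : ℝ => y * Real.log y) - fun y : ℝ => (1 - y) * Real.log (1 - y)) := by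
    funext y; simp only [Pi.neg_apply, Pi.sub_apply]; ring
  rw [hf]
  exact this.congr_deriv (by ring)


/-- the bound `ε ↦ (ε/2)·log[(Mx·My-1)(Mx-1)(My-1)] + 3·ℋ(ε/2)` is
strictly increasing on `(0, 2 - 2/Mx)`. -/
theorem strictMonoOn_bound {Mx My : ℕ} (hMx : 2 ≤ Mx) (hMxy : Mx ≤ My) :
    StrictMonoOn
      (fun ε : ℝ =>
        ε / 2 * Real.log (((Mx : ℝ) * My - 1) * ((Mx : ℝ) - 1) * ((My : ℝ) - 1)) +
          3 * binEnt (ε / 2))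
      (Set.Ioo 0 (2 - 2 / (Mx : ℝ))) := by
  have hMx2 : (2 : ℝ) ≤ (Mx : ℝ) := by exact_mod_cast hMx
  have hMy2 : (2 : ℝ) ≤ (My : ℝ) := by exact_mod_cast le_trans hMx hMxy
  have hMxy' : (Mx : ℝ) ≤ (My : ℝ) := by exact_mod_cast hMxy
  set L : ℝ := Real.log (((Mx : ℝ) * My - 1) * ((Mx : ℝ) - 1) * ((My : ℝ) - 1)) with hL
  have hub : 2 - 2 / (Mx : ℝ) ≤ 2 := by
    have : 0 ≤ 2 / (Mx : ℝ) := by positivity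
    linarith
  apply strictMonoOn_of_deriv_pos (convex_Ioo _ _)
  · -- continuity
    apply Continuous.continuousOn
    have hml := Real.continuous_mul_log
    have hb : Continuous binEnt := by
      unfold binEnt
      have h1 : Continuous fun x : ℝ => -(x * Real.log x) := hml.neg
      have h2 : Continuous fun x : ℝ => (1 - x) * Real.log (1 - x) :=
        hml.comp (continuous_const.sub continuous_id)
      exact (h1.sub h2).congr (fun y => by simp only [Pi.sub_apply]; ring)
    exact ((continuous_id.div_const 2).mul continuous_const).add
      (continuous_const.mul (hb.comp (continuous_id.div_const 2)))
  · intro x hx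
    rw [interior_Ioo] at hx
    obtain ⟨hx0, hx1⟩ := hx
    have heq : (2:ℝ) / (Mx:ℝ) = 2 * (1 / (Mx:ℝ)) := by ring
    have hx2 : x / 2 < 1 - 1 / (Mx : ℝ) := by linarith
    have hxpos : 0 < x / 2 := by linarith
    have hx21 : x / 2 < 1 := by
      have : 0 < 1 / (Mx : ℝ) := by positivity
      linarith
    have hd2 : HasDerivAt (fun y : ℝ => y / 2) (1/2) x := by
      simpa using (hasDerivAt_id x).div_const 2
    have hbe : HasDerivAt binEnt (Real.log (1 - x/2) - Real.log (x/2)) (x/2) :=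
      hasDerivAt_binEnt _ hxpos hx21
    have hD : HasDerivAt
        (fun ε : ℝ => ε / 2 * L + 3 * binEnt (ε / 2))
        (1/2 * L + 3 * ((Real.log (1 - x/2) - Real.log (x/2)) * (1/2))) x := by
      exact ((hd2.mul_const L).add ((show HasDerivAt (fun ε : ℝ => binEnt (ε / 2)) _ x from by have hc := hbe.comp x hd2; exact hc).const_mul 3))
    rw [hD.deriv]
    -- positivity of the derivative
    have key : Real.log (x/2) < Real.log (1 - x/2) + Real.log ((Mx:ℝ) - 1) := by
      rw [← Real.log_mul (by linarith) (by linarith)]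
      apply Real.log_lt_log hxpos
      have hMxpos : (0:ℝ) < (Mx:ℝ) := by linarith
      have hinv : (1:ℝ) / (Mx:ℝ) * (Mx:ℝ) = 1 := by field_simp
      nlinarith [mul_lt_mul_of_pos_right hx2 hMxpos]
    have hlogL : 3 * Real.log ((Mx:ℝ) - 1) ≤ L := by
      have e1 : (Mx:ℝ) - 1 ≤ (Mx:ℝ) * My - 1 := by nlinarith
      have e2 : ((Mx:ℝ)-1)*((Mx:ℝ)-1) ≤ ((Mx:ℝ)*My-1)*((Mx:ℝ)-1) :=
        mul_le_mul_of_nonneg_right e1 (by linarith)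
      have hMM : (0:ℝ) ≤ (Mx:ℝ)*My - 1 := by nlinarith
      have h1 : ((Mx:ℝ) - 1)^3 ≤ ((Mx : ℝ) * My - 1) * ((Mx : ℝ) - 1) * ((My : ℝ) - 1) := by
        calc ((Mx:ℝ)-1)^3 = (((Mx:ℝ)-1)*((Mx:ℝ)-1))*((Mx:ℝ)-1) := by ring
          _ ≤ (((Mx:ℝ)*My-1)*((Mx:ℝ)-1))*((My:ℝ)-1) :=
            mul_le_mul e2 (by linarith) (by linarith) (mul_nonneg hMM (by linarith))
      calc 3 * Real.log ((Mx:ℝ) - 1) = Real.log (((Mx:ℝ) - 1)^3) := by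
            rw [Real.log_pow]; push_cast; ring
        _ ≤ L := Real.log_le_log (pow_pos (by linarith) 3) h1
    linarith
end

section
/- Fix integers 2 ≤ M_x ≤ M_y and let γ ∈ (0, log M_x). Then the equation (ε/2)·log[(M_x·M_y − 1)(M_x − 1)(M_y − 1)] + 3·ℋ(ε/2) = γ has exactly one solution ε in the open interval (0, 2 − 2/M_x). -/
set_option maxHeartbeats 1000000

open scoped BigOperators

lemma binEnt_eq (x : ℝ) : binEnt x = Real.binEntropy x := by
  simp [binEnt, Real.binEntropy, Real.log_inv]; ring

/-- for `γ ∈ (0, log Mx)` the equation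
`(ε/2)·log[(Mx·My-1)(Mx-1)(My-1)] + 3·ℋ(ε/2) = γ` has exactly one solution
in the open interval `(0, 2 - 2/Mx)`. -/
theorem existsUnique_root {Mx My : ℕ} (hMx : 2 ≤ Mx) (hMxy : Mx ≤ My)
    (γ : ℝ) (hγ : γ ∈ Set.Ioo 0 (Real.log (Mx : ℝ))) :
    ∃! ε : ℝ, ε ∈ Set.Ioo 0 (2 - 2 / (Mx : ℝ)) ∧
      ε / 2 * Real.log (((Mx : ℝ) * My - 1) * ((Mx : ℝ) - 1) * ((My : ℝ) - 1)) +
        3 * binEnt (ε / 2) = γ := by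
  obtain ⟨hγ0, hγ1⟩ := hγ
  set nx : ℝ := (Mx : ℝ) with hnxdef
  set ny : ℝ := (My : ℝ) with hnydef
  have hnx : 2 ≤ nx := by rw [hnxdef]; exact_mod_cast hMx
  have hny : nx ≤ ny := by rw [hnxdef, hnydef]; exact_mod_cast hMxy
  have hnx0 : 0 < nx := by linarith
  set L : ℝ := Real.log ((nx * ny - 1) * (nx - 1) * (ny - 1)) with hLdef
  set f : ℝ → ℝ := fun ε => ε / 2 * L + 3 * Real.binEntropy (ε / 2) with hfdef
  set b : ℝ := 2 - 2 / nx with hbdef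
  have hinv : 1 / nx ≤ 1 / 2 := by
    apply one_div_le_one_div_of_le <;> linarith
  have hinv0 : 0 < 1 / nx := by positivity
  have hb0 : 0 < b := by
    rw [hbdef]
    have : 2 / nx ≤ 1 := by rw [div_le_one hnx0]; linarith
    linarith
  have ha : (1:ℝ) ≤ nx - 1 := by linarith
  have hd : nx - 1 ≤ ny - 1 := by linarith
  have hxy1 : nx + 1 ≤ nx * ny - 1 := by
    nlinarith [mul_nonneg hnx0.le (show (0:ℝ) ≤ ny - 2 by linarith)]
  have h1 : (nx - 1) * (nx - 1) ≤ (nx * ny - 1) * (ny - 1) :=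
    mul_le_mul (by linarith) hd (by linarith) (by linarith)
  have hC1 : (nx - 1) ^ 3 ≤ (nx * ny - 1) * (nx - 1) * (ny - 1) := by
    nlinarith [mul_le_mul_of_nonneg_right h1 (show (0:ℝ) ≤ nx - 1 by linarith)]
  have h2 : (1:ℝ) * 1 ≤ (nx - 1) * (ny - 1) :=
    mul_le_mul ha (by linarith) (by linarith) (by linarith)
  have hC2 : nx ≤ (nx * ny - 1) * (nx - 1) * (ny - 1) := by
    nlinarith [mul_le_mul hxy1 (show (1:ℝ) ≤ (nx - 1) * (ny - 1) by linarith)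
      zero_le_one (by linarith : (0:ℝ) ≤ nx * ny - 1)]
  have hL1 : 3 * Real.log (nx - 1) ≤ L := by
    rw [hLdef, show 3 * Real.log (nx - 1) = Real.log ((nx - 1) ^ 3) by
      rw [Real.log_pow]; push_cast; ring]
    exact Real.log_le_log (pow_pos (by linarith) 3) hC1
  have hL2 : Real.log nx ≤ L := Real.log_le_log hnx0 hC2
  have hlogx : 0 < Real.log nx := lt_trans hγ0 hγ1
  -- continuity
  have hcont : Continuous f := by
    apply Continuous.add
    · exact (continuous_id.div_const 2).mul continuous_const
    · exact continuous_const.mul (Real.binEntropy_continuous.comp (continuous_id.div_const 2))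
  -- strict monotonicity on [0, b]
  have hmono : StrictMonoOn f (Set.Icc 0 b) := by
    apply strictMonoOn_of_deriv_pos (convex_Icc 0 b) hcont.continuousOn
    intro x hx
    rw [interior_Icc] at hx
    obtain ⟨hx0, hxb⟩ := hx
    set t : ℝ := x / 2 with htdef
    have ht0 : 0 < t := by positivity
    have ht1 : t < 1 - 1 / nx := by
      have h2n : 2 / nx = 2 * (1 / nx) := by ring
      rw [htdef]; rw [hbdef, h2n] at hxb; linarith
    have ht1' : t < 1 := by linarith
    have hD : HasDerivAt f (L / 2 + 3 * ((Real.log (1 - t) - Real.log t) * (1 / 2))) x := by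
      have h1 : HasDerivAt (fun ε : ℝ => ε / 2) (1 / 2) x := by
        simpa using (hasDerivAt_id x).div_const 2
      have h2 : HasDerivAt (fun ε : ℝ => Real.binEntropy (ε / 2))
          ((Real.log (1 - t) - Real.log t) * (1 / 2)) x :=
        by have := (Real.hasDerivAt_binEntropy ht0.ne' ht1'.ne).comp x h1; exact this
      have := ((h1.mul_const L).add (h2.const_mul 3))
      exact this.congr_deriv (by ring)
    rw [hD.deriv]
    -- log((1-t)/t) > -log(nx-1)
    have hkey : Real.log (1 / (nx - 1)) < Real.log (1 - t) - Real.log t := by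
      rw [← Real.log_div (by linarith) ht0.ne']
      apply Real.log_lt_log (one_div_pos.2 (by linarith))
      rw [div_lt_div_iff₀ (by linarith) ht0]
      have h1t : 1 / nx < 1 - t := by linarith
      have e1 : 1 / nx * (nx - 1) = 1 - 1 / nx := by field_simp
      have e2 : 1 / nx * (nx - 1) < (1 - t) * (nx - 1) :=
        mul_lt_mul_of_pos_right h1t (by linarith)
      linarith
    rw [show Real.log (1 / (nx - 1)) = -Real.log (nx - 1) by
      rw [one_div, Real.log_inv]] at hkey
    linarith
  -- endpoint values
  have hf0 : f 0 = 0 := by simp [hfdef]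
  have hfb : Real.log nx < f b := by
    have hb2 : b / 2 = 1 - 1 / nx := by rw [hbdef]; ring
    have hsym : Real.binEntropy (b / 2) = Real.binEntropy (1 / nx) := by
      rw [hb2, Real.binEntropy_one_sub]
    have hbe : 1 / nx * Real.log nx ≤ Real.binEntropy (1 / nx) := by
      rw [Real.binEntropy]
      have h1 : Real.log (1 / nx)⁻¹ = Real.log nx := by
        rw [one_div, inv_inv]
      have h2 : 0 ≤ (1 - 1 / nx) * Real.log (1 - 1 / nx)⁻¹ := by
        apply mul_nonneg (by linarith)
        rw [Real.log_inv]
        have : Real.log (1 - 1 / nx) ≤ 0 :=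
          Real.log_nonpos (by linarith) (by linarith)
        linarith
      rw [h1]; linarith
    have h3 : (1 - 1 / nx) * Real.log nx ≤ (1 - 1 / nx) * L :=
      mul_le_mul_of_nonneg_left hL2 (by linarith)
    have hfbval : f b = (1 - 1 / nx) * L + 3 * Real.binEntropy (1 / nx) := by
      simp only [hfdef]
      rw [hb2, Real.binEntropy_one_sub]
    rw [hfbval]
    nlinarith [mul_pos hinv0 hlogx]
  -- existence via IVT
  have himage : γ ∈ f '' Set.Ioo 0 b := by
    apply intermediate_value_Ioo hb0.le hcont.continuousOn
    rw [hf0]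
    exact ⟨hγ0, lt_trans hγ1 hfb⟩
  obtain ⟨ε, hεmem, hεval⟩ := himage
  have hstmt : ∀ x : ℝ, (x / 2 * Real.log ((nx * ny - 1) * (nx - 1) * (ny - 1)) +
      3 * binEnt (x / 2)) = f x := by
    intro x; rw [hfdef]; simp only [binEnt_eq]; rfl
  refine ⟨ε, ⟨hεmem, by rw [hstmt]; exact hεval⟩, ?_⟩
  rintro ε' ⟨hε'mem, hε'val⟩
  rw [hstmt] at hε'val
  have hIcc : Set.Ioo (0:ℝ) b ⊆ Set.Icc 0 b := Set.Ioo_subset_Icc_self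
  exact hmono.injOn (hIcc hε'mem) (hIcc hεmem) (by rw [hε'val, hεval])
end
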